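/- If H is a pivotal Hopf algebra, i.e. there exists a grouplike element g ∈ H with S²(h) = g h g^{-1} for all h, then exp₀(H) = exp(H). -/

import Mathlib

open TensorProduct

noncomputable section

variable (k H : Type*) [CommRing k] [Ring H] [Bialgebra k H]

/-- Convolution product `f * g = m ∘ (f ⊗ g) ∘ Δ` on linear endomorphisms. -/
def conv (f g : Module.End k H) : Module.End k H :=
  LinearMap.mul' k H ∘ₗ TensorProduct.map f g ∘ₗ Coalgebra.comul

/-- The convolution unit `u ∘ ε`. -/
def convOne : Module.End k H := (Algebra.linearMap k H) ∘ₗ Coalgebra.counit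

/-- `convSeq F n = m_n ∘ (F 0 ⊗ F 1 ⊗ ⋯ ⊗ F (n-1)) ∘ Δ_n` (as an iterated convolution). -/
def convSeq : (ℕ → Module.End k H) → ℕ → Module.End k H
  | _, 0 => convOne k H
  | F, n + 1 => conv k H (F 0) (convSeq (fun j => F (j + 1)) n)

/-- The `n`-th Sweedler power `[n] = m_n ∘ Δ_n` as a linear endomorphism. -/
def sweedlerPow (n : ℕ) : Module.End k H := convSeq k H (fun _ => LinearMap.id) n

/-- The twisted Sweedler power `m_n ∘ (id ⊗ T ⊗ T² ⊗ ⋯ ⊗ T^(n-1)) ∘ Δ_n`. -/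
def twistPow (T : Module.End k H) (n : ℕ) : Module.End k H :=
  convSeq k H (fun j => T ^ j) n

/-- `exp₀(H)`: the least `n ≥ 1` with `[n] = u ∘ ε`, in `ℕ ∪ {∞}` (`sInf ∅ = ∞`). -/
def exp0 : ℕ∞ :=
  sInf {e : ℕ∞ | ∃ n : ℕ, e = n ∧ 0 < n ∧ sweedlerPow k H n = convOne k H}

/-- The `T`-twisted exponent: least `n ≥ 1` with
`m_n ∘ (id ⊗ T ⊗ ⋯ ⊗ T^(n-1)) ∘ Δ_n = u ∘ ε`, in `ℕ ∪ {∞}`.  For `T = S⁻²` this is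
`exp(H)` and for `T = S^(2i)` this is the twisted exponent `exp_{2i}(H)`. -/
def expAt (T : Module.End k H) : ℕ∞ :=
  sInf {e : ℕ∞ | ∃ n : ℕ, e = n ∧ 0 < n ∧ twistPow k H T n = convOne k H}

section Aux

variable {k H}

lemma conv_apply' (f p : Module.End k H) {x : H} {ι : Type*} (r : Coalgebra.Repr k x ι) :
    conv k H f p x = ∑ i ∈ r.index, f (r.left i) * p (r.right i) := by
  show (LinearMap.mul' k H ∘ₗ TensorProduct.map f p ∘ₗ Coalgebra.comul) x = _
  rw [LinearMap.comp_apply, LinearMap.comp_apply, ← r.eq, map_sum, map_sum]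
  exact Finset.sum_congr rfl fun i _ => by
    rw [TensorProduct.map_tmul, LinearMap.mul'_apply]

lemma convOne_apply (x : H) : convOne k H x = algebraMap k H (Coalgebra.counit x) := rfl

/-- Push a representation of `comul x` through a coalgebra-morphism-like map. -/
def mapRepr {x : H} {ι : Type*} (r : Coalgebra.Repr k x ι) (T : Module.End k H)
    (hΔ : Coalgebra.comul (R := k) (T x) = TensorProduct.map T T (Coalgebra.comul x)) :
    Coalgebra.Repr k (T x) ι where
  index := r.index
  left := fun i => T (r.left i)
  right := fun i => T (r.right i)
  eq := by
    rw [hΔ, ← r.eq, map_sum]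
    exact Finset.sum_congr rfl fun i _ => (TensorProduct.map_tmul ..).symm

@[simp] lemma mapRepr_index {x : H} {ι : Type*} (r : Coalgebra.Repr k x ι) (T : Module.End k H) (hΔ) :
    (mapRepr r T hΔ).index = r.index := rfl
@[simp] lemma mapRepr_left {x : H} {ι : Type*} (r : Coalgebra.Repr k x ι) (T : Module.End k H) (hΔ) :
    (mapRepr r T hΔ).left = fun i => T (r.left i) := rfl
@[simp] lemma mapRepr_right {x : H} {ι : Type*} (r : Coalgebra.Repr k x ι) (T : Module.End k H) (hΔ) :
    (mapRepr r T hΔ).right = fun i => T (r.right i) := rfl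

/-- Representation of a grouplike element. -/
def gRepr (a : H) (ha : Coalgebra.comul (R := k) a = a ⊗ₜ[k] a) : Coalgebra.Repr k a ℕ where
  index := ({0} : Finset ℕ)
  left := fun _ => a
  right := fun _ => a
  eq := by rw [Finset.sum_singleton, ha]

@[simp] lemma gRepr_index (a : H) (ha) : (gRepr (k := k) a ha).index = ({0} : Finset ℕ) := rfl
@[simp] lemma gRepr_left (a : H) (ha) : (gRepr (k := k) a ha).left = fun _ => a := rfl
@[simp] lemma gRepr_right (a : H) (ha) : (gRepr (k := k) a ha).right = fun _ => a := rfl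

/-- Representation of `a * x` for grouplike `a`. -/
def mulRepr (a : H) (ha : Coalgebra.comul (R := k) a = a ⊗ₜ[k] a) {x : H}
    {ι : Type*} (r : Coalgebra.Repr k x ι) : Coalgebra.Repr k (a * x) ι where
  index := r.index
  left := fun i => a * r.left i
  right := fun i => a * r.right i
  eq := by
    rw [Bialgebra.comul_mul, ha, ← r.eq, Finset.mul_sum]
    exact Finset.sum_congr rfl fun i _ => (Algebra.TensorProduct.tmul_mul_tmul ..).symm

@[simp] lemma mulRepr_index (a : H) (ha) {x : H} {ι : Type*} (r : Coalgebra.Repr k x ι) :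
    (mulRepr a ha r).index = r.index := rfl
@[simp] lemma mulRepr_left (a : H) (ha) {x : H} {ι : Type*} (r : Coalgebra.Repr k x ι) :
    (mulRepr a ha r).left = fun i => a * r.left i := rfl
@[simp] lemma mulRepr_right (a : H) (ha) {x : H} {ι : Type*} (r : Coalgebra.Repr k x ι) :
    (mulRepr a ha r).right = fun i => a * r.right i := rfl

lemma conv_id_convOne_apply (x : H) : conv k H LinearMap.id (convOne k H) x = x := by
  rw [conv_apply' _ _ (Coalgebra.Repr.arbitrary k x)]
  have h2 := congrArg (TensorProduct.rid k H)
    (Coalgebra.sum_tmul_counit_eq (Coalgebra.Repr.arbitrary k x))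
  simp only [map_sum, TensorProduct.rid_tmul, one_smul] at h2
  refine Eq.trans ?_ h2
  exact Finset.sum_congr rfl fun i _ => by
    rw [LinearMap.id_apply, convOne_apply, ← Algebra.commutes, ← Algebra.smul_def]

lemma sweedlerPow_succ (n : ℕ) :
    sweedlerPow k H (n + 1) = conv k H LinearMap.id (sweedlerPow k H n) := rfl

lemma convSeq_comp_apply (T : Module.End k H)
    (hΔ : ∀ x : H, Coalgebra.comul (R := k) (T x) = TensorProduct.map T T (Coalgebra.comul x))
    (hε : ∀ x : H, Coalgebra.counit (R := k) (T x) = Coalgebra.counit x) (n : ℕ) :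
    ∀ (F : ℕ → Module.End k H) (x : H),
      convSeq k H (fun j => F j ∘ₗ T) n x = convSeq k H F n (T x) := by
  induction n with
  | zero =>
    intro F x
    show convOne k H x = convOne k H (T x)
    rw [convOne_apply, convOne_apply, hε]
  | succ n ih =>
    intro F x
    have h1 : convSeq k H (fun j => F j ∘ₗ T) (n + 1)
        = conv k H (F 0 ∘ₗ T) (convSeq k H (fun j => F (j + 1) ∘ₗ T) n) := rfl
    have h2 : convSeq k H F (n + 1)
        = conv k H (F 0) (convSeq k H (fun j => F (j + 1)) n) := rfl
    rw [h1, h2, conv_apply' _ _ (Coalgebra.Repr.arbitrary k x),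
      conv_apply' _ _ (mapRepr (Coalgebra.Repr.arbitrary k x) T (hΔ x))]
    simp only [mapRepr_index, mapRepr_left, mapRepr_right]
    exact Finset.sum_congr rfl fun i _ => by
      rw [LinearMap.comp_apply, ih (fun j => F (j + 1))]

lemma sweedlerPow_comm (T : Module.End k H)
    (hΔ : ∀ x : H, Coalgebra.comul (R := k) (T x) = TensorProduct.map T T (Coalgebra.comul x))
    (hε : ∀ x : H, Coalgebra.counit (R := k) (T x) = Coalgebra.counit x)
    (hm : ∀ a b : H, T (a * b) = T a * T b) (h1 : T 1 = 1) (n : ℕ) :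
    ∀ x : H, sweedlerPow k H n (T x) = T (sweedlerPow k H n x) := by
  induction n with
  | zero =>
    intro x
    show convOne k H (T x) = T (convOne k H x)
    rw [convOne_apply, convOne_apply, hε, Algebra.algebraMap_eq_smul_one, map_smul, h1]
  | succ n ih =>
    intro x
    rw [sweedlerPow_succ, conv_apply' _ _ (mapRepr (Coalgebra.Repr.arbitrary k x) T (hΔ x)),
      conv_apply' _ _ (Coalgebra.Repr.arbitrary k x), map_sum]
    simp only [mapRepr_index, mapRepr_left, mapRepr_right, LinearMap.id_apply]
    exact Finset.sum_congr rfl fun i _ => by rw [ih, hm]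

lemma sweedlerPow_grouplike (a : H) (ha : Coalgebra.comul (R := k) a = a ⊗ₜ[k] a)
    (hε : Coalgebra.counit (R := k) a = 1) (n : ℕ) :
    sweedlerPow k H n a = a ^ n := by
  induction n with
  | zero =>
    show convOne k H a = a ^ 0
    rw [convOne_apply, hε, map_one, pow_zero]
  | succ n ih =>
    rw [sweedlerPow_succ, conv_apply' _ _ (gRepr a ha)]
    simp only [gRepr_index, gRepr_left, gRepr_right, LinearMap.id_apply, Finset.sum_singleton]
    rw [ih, ← pow_succ']

end Aux

/-- if `H` is pivotal, i.e. `S²` is conjugation by a grouplike element `g`,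
then `exp₀(H) = exp(H)` (where `exp(H) = expAt k H T` for `T` the inverse of `S²`). -/
theorem stmt11 (k H : Type*) [Field k] [Ring H] [HopfAlgebra k H]
    (g g' : H)
    (hgrp : Coalgebra.comul (R := k) g = g ⊗ₜ[k] g)
    (hcou : Coalgebra.counit (R := k) g = 1)
    (hgg' : g * g' = 1) (hg'g : g' * g = 1)
    (hpiv : ∀ h : H, HopfAlgebra.antipode (R := k) (HopfAlgebra.antipode (R := k) h)
      = g * h * g')
    (T : Module.End k H)
    (hT1 : T ∘ₗ ((HopfAlgebra.antipode (R := k) (A := H)) ∘ₗ HopfAlgebra.antipode (R := k)) =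
      LinearMap.id)
    (hT2 : ((HopfAlgebra.antipode (R := k) (A := H)) ∘ₗ HopfAlgebra.antipode (R := k)) ∘ₗ T =
      LinearMap.id) :
    exp0 k H = expAt k H T := by
  classical
  have hcan : ∀ X : H, g * (g' * X) = X := fun X => by rw [← mul_assoc, hgg', one_mul]
  have hcan' : ∀ X : H, g' * (g * X) = X := fun X => by rw [← mul_assoc, hg'g, one_mul]
  have hx : ∀ y : H, g * (g' * y * g) * g' = y := by
    intro y
    rw [mul_assoc g', ← mul_assoc g g', hgg', one_mul, mul_assoc, hgg', mul_one]
  have hT : ∀ x : H, T x = g' * x * g := by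
    intro x
    have h1 := LinearMap.congr_fun hT1 (g' * x * g)
    simp only [LinearMap.comp_apply, LinearMap.id_apply] at h1
    rw [hpiv, hx x] at h1
    exact h1
  have hεg' : Coalgebra.counit (R := k) g' = 1 := by
    have h := Bialgebra.counit_mul (R := k) g g'
    rw [hgg', Bialgebra.counit_one, hcou, one_mul] at h
    exact h.symm
  have hΔg' : Coalgebra.comul (R := k) g' = g' ⊗ₜ[k] g' := by
    have h2 : Coalgebra.comul (R := k) g' * Coalgebra.comul (R := k) g = 1 := by
      rw [← Bialgebra.comul_mul, hg'g, Bialgebra.comul_one]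
    have h3 : Coalgebra.comul (R := k) g * (g' ⊗ₜ[k] g') = 1 := by
      rw [hgrp, Algebra.TensorProduct.tmul_mul_tmul, hgg']
      exact (Algebra.TensorProduct.one_def).symm
    calc Coalgebra.comul (R := k) g'
        = Coalgebra.comul (R := k) g' * (Coalgebra.comul (R := k) g * (g' ⊗ₜ[k] g')) := by
          rw [h3, mul_one]
      _ = (Coalgebra.comul (R := k) g' * Coalgebra.comul (R := k) g) * (g' ⊗ₜ[k] g') :=
          (mul_assoc _ _ _).symm
      _ = g' ⊗ₜ[k] g' := by rw [h2, one_mul]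
  have hmT : ∀ a b : H, T (a * b) = T a * T b := by
    intro a b
    rw [hT, hT, hT]
    simp only [mul_assoc, hcan]
  have h1T : T 1 = 1 := by rw [hT, mul_one, hg'g]
  have hεT : ∀ x : H, Coalgebra.counit (R := k) (T x) = Coalgebra.counit x := by
    intro x
    rw [hT, Bialgebra.counit_mul, Bialgebra.counit_mul, hεg', hcou, one_mul, mul_one]
  have hΔT : ∀ x : H,
      Coalgebra.comul (R := k) (T x) = TensorProduct.map T T (Coalgebra.comul x) := by
    intro x
    rw [hT, Bialgebra.comul_mul, Bialgebra.comul_mul, hΔg', hgrp]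
    generalize Coalgebra.comul (R := k) x = z
    induction z using TensorProduct.induction_on with
    | zero => simp
    | tmul a b =>
      rw [Algebra.TensorProduct.tmul_mul_tmul, Algebra.TensorProduct.tmul_mul_tmul,
        TensorProduct.map_tmul, hT, hT]
    | add u v hu hv =>
      rw [mul_add, add_mul, map_add, hu, hv]
  -- twistPow recursion
  have tps : ∀ m : ℕ, twistPow k H T (m + 1)
      = conv k H LinearMap.id (twistPow k H T m ∘ₗ T) := by
    intro m
    have h1 : twistPow k H T (m + 1)
        = conv k H (T ^ 0) (convSeq k H (fun j => T ^ (j + 1)) m) := rfl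
    rw [h1, pow_zero, Module.End.one_eq_id]
    congr 1
    have h2 : (fun j => T ^ (j + 1)) = fun j => (T ^ j) ∘ₗ T := by
      funext j; rw [pow_succ, Module.End.mul_eq_comp]
    rw [h2]
    exact LinearMap.ext (convSeq_comp_apply T hΔT hεT m (fun j => T ^ j))
  -- the key identity
  have key : ∀ n : ℕ, ∀ x : H,
      twistPow k H T (n + 1) x = g * sweedlerPow k H (n + 1) (g' * x) * g ^ n := by
    intro n
    induction n with
    | zero =>
      intro x
      have e1 : twistPow k H T 1 = conv k H LinearMap.id (convOne k H) := by
        show conv k H (T ^ 0) (convOne k H) = _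
        rw [pow_zero, Module.End.one_eq_id]
      have e2 : sweedlerPow k H (0 + 1) (g' * x) = g' * x := conv_id_convOne_apply _
      rw [e1, conv_id_convOne_apply, e2, pow_zero, mul_one, hcan]
    | succ n ih =>
      intro x
      rw [tps (n + 1), conv_apply' _ _ (Coalgebra.Repr.arbitrary k x), sweedlerPow_succ,
        conv_apply' _ _ (mulRepr g' hΔg' (Coalgebra.Repr.arbitrary k x))]
      simp only [mulRepr_index, mulRepr_left, mulRepr_right, LinearMap.id_apply,
        LinearMap.comp_apply]
      rw [Finset.mul_sum, Finset.sum_mul]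
      refine Finset.sum_congr rfl fun i _ => ?_
      set L := (Coalgebra.Repr.arbitrary k x).left i
      set R := (Coalgebra.Repr.arbitrary k x).right i
      rw [ih (T R), hT R]
      have hcomm := sweedlerPow_comm T hΔT hεT hmT h1T (n + 1) (g' * R)
      rw [hT (g' * R), hT (sweedlerPow k H (n + 1) (g' * R))] at hcomm
      -- hcomm : [n+1] (g' * (g' * R) * g) = g' * [n+1](g' * R) * g
      rw [show g' * (g' * R * g) = g' * (g' * R) * g by rw [mul_assoc g' (g' * R) g], hcomm]
      simp only [mul_assoc, hcan, hcan']
      rw [← pow_succ']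
  have swg : ∀ m : ℕ, sweedlerPow k H m g = g ^ m := sweedlerPow_grouplike g hgrp hcou
  have sw1 : ∀ m : ℕ, sweedlerPow k H m (1 : H) = 1 := fun m => by
    have := sweedlerPow_grouplike (k := k) (1 : H)
      (by rw [Bialgebra.comul_one]; exact Algebra.TensorProduct.one_def)
      (by rw [Bialgebra.counit_one]) m
    rwa [one_pow] at this
  have fwd : ∀ n : ℕ, sweedlerPow k H (n + 1) = convOne k H →
      twistPow k H T (n + 1) = convOne k H := by
    intro n hs
    have hgn : g ^ (n + 1) = 1 := by
      rw [← swg (n + 1), hs, convOne_apply, hcou, map_one]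
    ext x
    rw [key n x, hs, convOne_apply, convOne_apply, Bialgebra.counit_mul, hεg', one_mul,
      ← Algebra.commutes, mul_assoc, ← pow_succ', hgn, mul_one]
  have bwd : ∀ n : ℕ, twistPow k H T (n + 1) = convOne k H →
      sweedlerPow k H (n + 1) = convOne k H := by
    intro n ht
    have hgn : g ^ (n + 1) = 1 := by
      have h := key n g
      rw [ht, convOne_apply, hcou, map_one, hg'g, sw1, mul_one] at h
      rw [pow_succ']
      exact h.symm
    ext x
    have h := key n (g * x)
    rw [ht, hcan'] at h
    rw [convOne_apply, Bialgebra.counit_mul, hcou, one_mul] at h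
    -- h : algebraMap (ε x) = g * [n+1] x * g^n
    have h2 : g' * (g * sweedlerPow k H (n + 1) x * g ^ n) * g
        = sweedlerPow k H (n + 1) x := by
      simp only [mul_assoc, hcan']
      rw [← pow_succ, hgn, mul_one]
    calc sweedlerPow k H (n + 1) x
        = g' * (g * sweedlerPow k H (n + 1) x * g ^ n) * g := h2.symm
      _ = g' * algebraMap k H (Coalgebra.counit x) * g := by rw [← h]
      _ = convOne k H x := by
          rw [← Algebra.commutes, mul_assoc, hg'g, mul_one]; rfl
  unfold exp0 expAt
  congr 1
  ext e
  simp only [Set.mem_setOf_eq]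
  constructor
  · rintro ⟨n, rfl, hn, h⟩
    obtain ⟨m, rfl⟩ := Nat.exists_eq_succ_of_ne_zero hn.ne'
    exact ⟨m + 1, rfl, hn, fwd m h⟩
  · rintro ⟨n, rfl, hn, h⟩
    obtain ⟨m, rfl⟩ := Nat.exists_eq_succ_of_ne_zero hn.ne'
    exact ⟨m + 1, rfl, hn, bwd m h⟩
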